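/- Let ⟨E,Φ⟩ be a symmetric bilinear space over a finite field F whose dimension κ has uncountable cofinality. If the splitting number 𝔰 satisfies 𝔰 > κ, then ⟨E,Φ⟩ is not a Gross space; that is, there exists a subspace U of infinite (countable) dimension with dim U^⊥ = κ. -/

import Mathlib

/-- The orthogonal complement of a subspace with respect to a bilinear form. -/
def ortho {F E : Type} [Field F] [AddCommGroup E] [Module F E]
    (Φ : E →ₗ[F] E →ₗ[F] F) (U : Submodule F E) : Submodule F E where
  carrier := {x | ∀ y ∈ U, Φ x y = 0}
  add_mem' := by
    intro a b ha hb y hy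
    simp [map_add, ha y hy, hb y hy]
  zero_mem' := by
    intro y hy; simp
  smul_mem' := by
    intro c x hx y hy
    simp [hx y hy]

/-- The splitting number 𝔰: the least cardinality of a splitting family on ω. -/
noncomputable def splittingNumber : Cardinal :=
  sInf { c | ∃ S : Set (Set ℕ), Cardinal.mk S = c ∧
    ∀ A : Set ℕ, A.Infinite → ∃ s ∈ S, (A ∩ s).Infinite ∧ (A \ s).Infinite }

/-- Linear independence of differences of basis vectors along an injective
sequence of indices. -/
lemma li_sub {F E : Type} [Field F] [AddCommGroup E] [Module F E]
    {ι : Type} (B : Module.Basis ι F E) (j : ℕ → ι) (hj : Function.Injective j) :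
    LinearIndependent F (fun n : ℕ => B (j (2 * n)) - B (j (2 * n + 1))) := by
  classical
  rw [linearIndependent_iff']
  intro s f hsum i hi
  have h := congrArg (B.coord (j (2 * i))) hsum
  rw [map_sum, map_zero] at h
  have hcalc : ∀ n ∈ s,
      B.coord (j (2 * i)) (f n • (B (j (2 * n)) - B (j (2 * n + 1)))) =
        if n = i then f n else 0 := by
    intro n _
    rw [map_smul, map_sub, Module.Basis.coord_apply, Module.Basis.coord_apply,
      Module.Basis.repr_self, Module.Basis.repr_self, Finsupp.single_apply, Finsupp.single_apply]
    have h1 : (j (2 * n) = j (2 * i)) ↔ (n = i) := by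
      constructor
      · intro h'; have := hj h'; omega
      · intro h'; subst h'; rfl
    have h2 : ¬ (j (2 * n + 1) = j (2 * i)) := by
      intro h'; have := hj h'; omega
    by_cases hni : n = i
    · subst hni
      simp [h2]
    · simp [hni, h2, (not_iff_not.mpr h1).mpr hni]
  rw [Finset.sum_congr rfl hcalc, Finset.sum_ite_eq' s i (fun n => f n)] at h
  simpa [hi] using h

/-- If E is a symmetric bilinear space over a finite field, its dimension κ has
uncountable cofinality, and 𝔰 > κ, then E is not Gross: some countably infinite
dimensional subspace has orthogonal complement of full dimension κ. -/
theorem not_gross_of_splitting_gt {F E : Type} [Field F] [Finite F]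
    [AddCommGroup E] [Module F E]
    (Φ : E →ₗ[F] E →ₗ[F] F) (hsymm : ∀ x y, Φ x y = Φ y x)
    (κ : Cardinal) (hκ : Module.rank F E = κ)
    (hcof : Cardinal.aleph0 < κ.ord.cof)
    (hs : κ < splittingNumber) :
    ∃ U : Submodule F E, Module.rank F U = Cardinal.aleph0 ∧
      Module.rank F (ortho Φ U) = κ := by
  classical
  -- basic cardinal facts
  have hκinf : Cardinal.aleph0 < κ := lt_of_lt_of_le hcof (Ordinal.cof_ord_le κ)
  -- a basis of E
  let B := Module.Basis.ofVectorSpace F E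
  set ι := Module.Basis.ofVectorSpaceIndex F E with hι
  have hmkι : Cardinal.mk ι = κ := by rw [B.mk_eq_rank'']; exact hκ
  have hinf : Infinite ι := by
    rw [Cardinal.infinite_iff, hmkι]; exact hκinf.le
  let g : ℕ ↪ ι := Infinite.natEmbedding ι
  let v : ℕ → E := fun n => B (g n)
  -- the candidate splitting family
  let Aset : ι → F → Set ℕ := fun α c => {n | Φ (B α) (v n) = c}
  let 𝒮 : Set (Set ℕ) := Set.range (fun p : ι × F => Aset p.1 p.2)
  have h𝒮 : Cardinal.mk 𝒮 ≤ κ := by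
    refine le_trans Cardinal.mk_range_le ?_
    rw [Cardinal.mk_prod, Cardinal.lift_id, Cardinal.lift_id, hmkι]
    have hF : Cardinal.mk F ≤ Cardinal.aleph0 := (Cardinal.lt_aleph0_of_finite F).le
    calc κ * Cardinal.mk F ≤ κ * Cardinal.aleph0 := by
          exact mul_le_mul_right hF κ
      _ = κ := Cardinal.mul_eq_left hκinf.le hκinf.le Cardinal.aleph0_ne_zero
  -- since #𝒮 ≤ κ < 𝔰, 𝒮 is not a splitting family
  have hnotsplit : ∃ A : Set ℕ, A.Infinite ∧
      ∀ s ∈ 𝒮, (A ∩ s).Finite ∨ (A \ s).Finite := by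
    by_contra h
    push_neg at h
    have hmem : Cardinal.mk 𝒮 ∈ { c | ∃ S : Set (Set ℕ), Cardinal.mk S = c ∧
        ∀ A : Set ℕ, A.Infinite → ∃ s ∈ S, (A ∩ s).Infinite ∧ (A \ s).Infinite } := by
      refine ⟨𝒮, rfl, ?_⟩
      intro A hA
      obtain ⟨s, hs𝒮, h1, h2⟩ := h A hA
      exact ⟨s, hs𝒮, h1, h2⟩
    have : splittingNumber ≤ Cardinal.mk 𝒮 := csInf_le' hmem
    exact absurd (hs.trans_le (this.trans h𝒮)) (lt_irrefl κ)
  obtain ⟨A, hAinf, hA⟩ := hnotsplit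
  -- enumerate A
  let b0 : ℕ → ℕ := fun n => (Set.Infinite.natEmbedding A hAinf n : ℕ)
  have hb0inj : Function.Injective b0 := fun m n h =>
    (Set.Infinite.natEmbedding A hAinf).injective (Subtype.ext h)
  have hb0A : ∀ n, b0 n ∈ A := fun n => (Set.Infinite.natEmbedding A hAinf n).2
  -- for each α there is a constant value c and threshold N
  have key : ∀ α : ι, ∃ c : F, ∃ N : ℕ, ∀ n ≥ N, Φ (B α) (v (b0 n)) = c := by
    intro α
    have hex : ∃ c : F, (A ∩ Aset α c).Infinite := by
      by_contra hcon
      push_neg at hcon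
      have hcover : A = ⋃ c : F, A ∩ Aset α c := by
        ext n
        simp only [Set.mem_iUnion, Set.mem_inter_iff, Set.mem_setOf_eq]
        constructor
        · intro hn; exact ⟨Φ (B α) (v n), hn, rfl⟩
        · rintro ⟨c, hn, -⟩; exact hn
      exact hAinf (hcover ▸ Set.finite_iUnion hcon)
    obtain ⟨c, hc⟩ := hex
    have hsplit := hA (Aset α c) ⟨(α, c), rfl⟩
    have hfin : (A \ Aset α c).Finite := by
      rcases hsplit with h1 | h2
      · exact absurd h1 hc
      · exact h2
    have hexc : {n : ℕ | ¬ (b0 n ∈ Aset α c)}.Finite := by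
      have hsub : {n : ℕ | ¬ (b0 n ∈ Aset α c)} ⊆ b0 ⁻¹' (A \ Aset α c) := by
        intro n hn; exact ⟨hb0A n, hn⟩
      exact (hfin.preimage (Set.injOn_of_injective hb0inj)).subset hsub
    obtain ⟨N, hN⟩ := hexc.bddAbove
    refine ⟨c, N + 1, fun n hn => ?_⟩
    by_contra hne
    have hle : n ≤ N := hN (Set.mem_setOf_eq ▸ hne)
    omega
  choose c N hcN using key
  -- some fiber of N has full size κ
  have hfiber : ∃ k : ℕ, Cardinal.mk {α : ι // N α = k} = κ := by
    by_contra hcon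
    push_neg at hcon
    have hlt : ∀ k : ℕ, Cardinal.mk {α : ι // N α = k} < κ := by
      intro k
      refine lt_of_le_of_ne ?_ (hcon k)
      rw [← hmkι]
      exact Cardinal.mk_subtype_le _
    have hsup : (⨆ k : ℕ, Cardinal.mk {α : ι // N α = k}) < κ :=
      Ordinal.iSup_lt (by rwa [Cardinal.mk_nat]) hlt
    have heq : κ = Cardinal.sum (fun k : ℕ => Cardinal.mk {α : ι // N α = k}) := by
      rw [← Cardinal.mk_sigma, ← hmkι]
      exact (Cardinal.mk_congr (Equiv.sigmaFiberEquiv N)).symm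
    have hle : κ ≤ Cardinal.mk ℕ * ⨆ k : ℕ, Cardinal.mk {α : ι // N α = k} :=
      heq ▸ Cardinal.sum_le_mk_mul_iSup _
    rw [Cardinal.mk_nat] at hle
    exact absurd hle (not_le.mpr (Cardinal.mul_lt_of_lt hκinf.le hκinf hsup))
  obtain ⟨k₀, hk₀⟩ := hfiber
  -- the sequence generating U
  let j : ℕ → ι := fun m => g (b0 (k₀ + m))
  have hjinj : Function.Injective j := by
    intro m m' h
    have := hb0inj (g.injective h)
    omega
  let u : ℕ → E := fun n => B (j (2 * n)) - B (j (2 * n + 1))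
  have hu : LinearIndependent F u := li_sub B j hjinj
  refine ⟨Submodule.span F (Set.range u), ?_, ?_⟩
  · rw [rank_span hu, Cardinal.mk_range_eq u hu.injective, Cardinal.mk_nat]
  · -- orthogonality of basis vectors in the fiber
    have horth : ∀ α : ι, N α = k₀ → B α ∈ ortho Φ (Submodule.span F (Set.range u)) := by
      intro α hα y hy
      have hker : Submodule.span F (Set.range u) ≤ LinearMap.ker (Φ (B α)) := by
        rw [Submodule.span_le]
        rintro x ⟨n, rfl⟩
        have h1 : Φ (B α) (v (b0 (k₀ + 2 * n))) = c α :=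
          hcN α (k₀ + 2 * n) (by rw [hα]; omega)
        have h2 : Φ (B α) (v (b0 (k₀ + 2 * n + 1))) = c α :=
          hcN α (k₀ + 2 * n + 1) (by rw [hα]; omega)
        have : Φ (B α) (u n) = 0 := by
          show Φ (B α) (B (j (2 * n)) - B (j (2 * n + 1))) = 0
          rw [map_sub]
          show Φ (B α) (v (b0 (k₀ + 2 * n))) - Φ (B α) (v (b0 (k₀ + 2 * n + 1))) = 0
          rw [h1, h2, sub_self]
        exact LinearMap.mem_ker.mpr this
      exact LinearMap.mem_ker.mp (hker hy)
    -- lower bound via the fiber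
    apply le_antisymm
    · rw [← hκ]; exact Submodule.rank_le _
    · rw [← hk₀]
      let y : {α : ι // N α = k₀} → (ortho Φ (Submodule.span F (Set.range u))) :=
        fun α => ⟨B α.1, horth α.1 α.2⟩
      have hyli : LinearIndependent F y := by
        apply LinearIndependent.of_comp (ortho Φ (Submodule.span F (Set.range u))).subtype
        have : (ortho Φ (Submodule.span F (Set.range u))).subtype ∘ y
            = fun α : {α : ι // N α = k₀} => B α.1 := rfl
        rw [this]
        exact B.linearIndependent.comp Subtype.val Subtype.val_injective
      exact hyli.cardinal_le_rank
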